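/- arXiv:2312.01228 — 3 statements merged into one kernel-verified Lean document; each statement's English description precedes it below -/
import Mathlib

section
/- For real numbers l ≤ 0 ≤ u and any real t with l ≤ t ≤ u, there exist x, s ≥ 0 and z ∈ {0,1} satisfying x - s = t, x ≤ u·z, s ≤ -l·(1-z), and for any such x, s, z it holds that x = max(0, t). -/
/-- Exactness of the big-M MILP encoding of the ReLU function. -/
theorem bigM_relu_exact (l u t : ℝ) (hl : l ≤ 0) (hu : 0 ≤ u)
    (hlt : l ≤ t) (htu : t ≤ u) :
    (∃ x s z : ℝ, 0 ≤ x ∧ 0 ≤ s ∧ (z = 0 ∨ z = 1) ∧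
      x - s = t ∧ x ≤ u * z ∧ s ≤ -l * (1 - z)) ∧
    (∀ x s z : ℝ, 0 ≤ x → 0 ≤ s → (z = 0 ∨ z = 1) →
      x - s = t → x ≤ u * z → s ≤ -l * (1 - z) → x = max 0 t) := by
  constructor
  · rcases le_or_gt 0 t with h | h
    · exact ⟨t, 0, 1, h, le_refl 0, Or.inr rfl, by ring, by linarith, by linarith⟩
    · exact ⟨0, -t, 0, le_refl 0, by linarith, Or.inl rfl, by ring, by linarith, by linarith⟩
  · rintro x s z hx hs (rfl | rfl) hxs hxu hsl
    · have : x = 0 := le_antisymm (by linarith) hx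
      subst this
      have : s = -t := by linarith
      rw [max_eq_left (by linarith)]
    · have : s = 0 := le_antisymm (by linarith) hs
      subst this
      rw [max_eq_right (by linarith)]
      linarith
end

section
/- If every entry of the weight term satisfies max(w_{js}·max(0,U_s), w_{js}·max(0,L_s)) being summed gives T ≥ 0, then for any degrees 1 ≤ d_i⁺ ≤ d_max+1 and d_l⁺ ≥ 2 and any x with max(0,L) ≤ x ≤ max(0,U) componentwise, Σ_{l ∈ N⁺(i)} (1/√(d_i⁺ d_l⁺)) wⱼᵀ x_l ≤ √((d_max+1)/2) · T. -/
/-- Validity of the GCN FBBT upper bound: the aggregated pre-activation over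
the closed neighborhood is at most √((d_max+1)/2) times the interval
bound T. -/
theorem gcn_fbbt_upper_bound_valid (N n dmax : ℕ)
    (G : SimpleGraph (Fin N)) [DecidableRel G.Adj]
    (w L U : Fin n → ℝ) (x : Fin N → Fin n → ℝ)
    (T : ℝ)
    (hT : T = ∑ s, max (w s * max 0 (U s)) (w s * max 0 (L s)))
    (hTpos : 0 ≤ T)
    (hx : ∀ l s, max 0 (L s) ≤ x l s ∧ x l s ≤ max 0 (U s))
    (i : Fin N)
    (hdi : G.degree i + 1 ≤ dmax + 1)
    (hdl : ∀ l ∈ insert i (G.neighborFinset i), 2 ≤ G.degree l + 1) :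
    ∑ l ∈ insert i (G.neighborFinset i),
        (1 / Real.sqrt (((G.degree i : ℝ) + 1) * ((G.degree l : ℝ) + 1))) *
          ∑ s, w s * x l s
      ≤ Real.sqrt (((dmax : ℝ) + 1) / 2) * T := by
  set D : ℝ := (G.degree i : ℝ) + 1 with hD
  have hD1 : (1:ℝ) ≤ D := by simp [hD]
  have hD0 : (0:ℝ) < D := by linarith
  -- inner sum bound
  have hS : ∀ l : Fin N, ∑ s, w s * x l s ≤ T := by
    intro l
    rw [hT]
    apply Finset.sum_le_sum
    intro s _
    rcases le_or_gt 0 (w s) with hw | hw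
    · exact le_max_of_le_left (mul_le_mul_of_nonneg_left (hx l s).2 hw)
    · exact le_max_of_le_right (mul_le_mul_of_nonpos_left (hx l s).1 hw.le)
  have hstep1 : ∑ l ∈ insert i (G.neighborFinset i),
        (1 / Real.sqrt (D * ((G.degree l : ℝ) + 1))) * ∑ s, w s * x l s
      ≤ ∑ l ∈ insert i (G.neighborFinset i),
        (1 / Real.sqrt (D * ((G.degree l : ℝ) + 1))) * T := by
    apply Finset.sum_le_sum
    intro l _
    have hc : 0 ≤ 1 / Real.sqrt (D * ((G.degree l : ℝ) + 1)) := by positivity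
    exact mul_le_mul_of_nonneg_left (hS l) hc
  refine hstep1.trans ?_
  rw [← Finset.sum_mul]
  apply mul_le_mul_of_nonneg_right _ hTpos
  -- coefficient sum bound
  have hcard : (insert i (G.neighborFinset i)).card = G.degree i + 1 := by
    rw [Finset.card_insert_of_notMem (by simp), SimpleGraph.card_neighborFinset_eq_degree]
  have hstep2 : ∑ l ∈ insert i (G.neighborFinset i),
      (1 / Real.sqrt (D * ((G.degree l : ℝ) + 1))) ≤ D * (1 / Real.sqrt (D * 2)) := by
    calc ∑ l ∈ insert i (G.neighborFinset i), (1 / Real.sqrt (D * ((G.degree l : ℝ) + 1)))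
        ≤ ∑ _l ∈ insert i (G.neighborFinset i), (1 / Real.sqrt (D * 2)) := by
          apply Finset.sum_le_sum
          intro l hl
          have h2 : (2:ℝ) ≤ (G.degree l : ℝ) + 1 := by exact_mod_cast hdl l hl
          apply one_div_le_one_div_of_le (by positivity)
          exact Real.sqrt_le_sqrt (by nlinarith)
      _ = D * (1 / Real.sqrt (D * 2)) := by
          rw [Finset.sum_const, hcard, nsmul_eq_mul]
          push_cast [hD]
          ring
  refine hstep2.trans ?_
  have hEq : D * (1 / Real.sqrt (D * 2)) = Real.sqrt (D / 2) := by
    rw [Real.sqrt_mul hD0.le, Real.sqrt_div hD0.le]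
    rw [← Real.sqrt_mul_self hD0.le]
    have hs : 0 < Real.sqrt D := Real.sqrt_pos.mpr hD0
    have h2 : 0 < Real.sqrt 2 := by positivity
    field_simp
    have hm := Real.mul_self_sqrt (by positivity : (0:ℝ) ≤ (G.degree i : ℝ) + 1)
    nlinarith [hm, Real.sq_sqrt (Real.sqrt_nonneg (D^2))]
  rw [hEq]
  apply Real.sqrt_le_sqrt
  have : D ≤ (dmax : ℝ) + 1 := by
    rw [hD]; exact_mod_cast hdi
  linarith
end

section
/- A feedforward ReLU network with the big-M MILP encoding is exact: for any input x⁰ in the box Ω with valid layerwise bounds L^k ≤ W^k x^{k-1} + b^k ≤ U^k (computed by FBBT), the feasible set of the MILP constraints projected onto (x⁰, output) equals the graph of the network function f, i.e., the unique output consistent with the constraints is f(x⁰). -/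
/-- Exactness of the big-M MILP encoding of a feedforward ReLU network: for a
fixed input, with valid layerwise pre-activation bounds, any feasible point of
the MILP constraints reproduces the true layer outputs of the network. -/
theorem relu_network_milp_exact (K : ℕ) (n : ℕ → ℕ)
    (W : (k : ℕ) → Fin (n (k + 1)) → Fin (n k) → ℝ)
    (b : (k : ℕ) → Fin (n (k + 1)) → ℝ)
    (L U : (k : ℕ) → Fin (n k) → ℝ)
    (xtrue : (k : ℕ) → Fin (n k) → ℝ)
    (htrue : ∀ k < K, ∀ j : Fin (n (k + 1)),
      xtrue (k + 1) j = max 0 ((∑ i, W k j i * xtrue k i) + b k j))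
    (hbounds : ∀ k < K, ∀ j : Fin (n (k + 1)),
      L (k + 1) j ≤ (∑ i, W k j i * xtrue k i) + b k j ∧
      (∑ i, W k j i * xtrue k i) + b k j ≤ U (k + 1) j)
    (x s : (k : ℕ) → Fin (n k) → ℝ)
    (z : (k : ℕ) → Fin (n k) → ℝ)
    (hinput : ∀ i : Fin (n 0), x 0 i = xtrue 0 i)
    (haff : ∀ k < K, ∀ j : Fin (n (k + 1)),
      (∑ i, W k j i * x k i) + b k j = x (k + 1) j - s (k + 1) j)
    (hxnn : ∀ k < K, ∀ j : Fin (n (k + 1)), 0 ≤ x (k + 1) j)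
    (hsnn : ∀ k < K, ∀ j : Fin (n (k + 1)), 0 ≤ s (k + 1) j)
    (hxu : ∀ k < K, ∀ j : Fin (n (k + 1)),
      x (k + 1) j ≤ U (k + 1) j * z (k + 1) j)
    (hsl : ∀ k < K, ∀ j : Fin (n (k + 1)),
      s (k + 1) j ≤ -L (k + 1) j * (1 - z (k + 1) j))
    (hz : ∀ k < K, ∀ j : Fin (n (k + 1)),
      z (k + 1) j = 0 ∨ z (k + 1) j = 1) :
    ∀ k ≤ K, ∀ j : Fin (n k), x k j = xtrue k j := by
  intro k
  induction k with
  | zero => intro _ j; exact hinput j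
  | succ k ih =>
    intro hk j
    have hkK : k < K := hk
    have ihx : ∀ i : Fin (n k), x k i = xtrue k i := ih (le_of_lt hkK)
    have hsum : (∑ i, W k j i * x k i) + b k j = (∑ i, W k j i * xtrue k i) + b k j := by
      congr 1
      exact Finset.sum_congr rfl fun i _ => by rw [ihx i]
    set a := (∑ i, W k j i * xtrue k i) + b k j with ha
    have haff' : a = x (k + 1) j - s (k + 1) j := by rw [← hsum]; exact haff k hkK j
    have htrue' : xtrue (k + 1) j = max 0 a := htrue k hkK j
    have hLb := (hbounds k hkK j).1
    have hUb := (hbounds k hkK j).2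
    rcases hz k hkK j with h0 | h1
    · -- z = 0 : x' ≤ 0 so x' = 0, a = -s' ≤ 0
      have hx0 : x (k + 1) j = 0 := by
        have := hxu k hkK j
        rw [h0, mul_zero] at this
        exact le_antisymm this (hxnn k hkK j)
      have ha0 : a ≤ 0 := by
        have := hsnn k hkK j
        rw [haff', hx0]; linarith
      rw [htrue', hx0, max_eq_left ha0]
    · -- z = 1 : s' ≤ 0 so s' = 0, x' = a ≥ 0
      have hs0 : s (k + 1) j = 0 := by
        have := hsl k hkK j
        rw [h1] at this
        simp at this
        exact le_antisymm this (hsnn k hkK j)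
      have hxa : x (k + 1) j = a := by rw [haff', hs0]; ring
      rw [htrue', hxa, max_eq_right (hxa ▸ hxnn k hkK j)]
end
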